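/- Let p_{4,k}, k = 0,…,4, be the classical Bernstein basis of ℙ₄[−1,2], i.e. p_{4,k}(x) = C(4,k)(x+1)^k(2−x)^{4−k}/81. Then the coordinates of x³ in this basis are γ_{4,0} = −1, γ_{4,1} = 5/4, γ_{4,2} = −1, γ_{4,3} = −1, γ_{4,4} = 8, and there exist nodes t_{4,k} = γ_{4,k}^{1/3} ∈ [−1,2] (real cube roots) and weights α_{4,k} = 1 such that the operator B₄f = Σ_{k=0}^4 f(t_{4,k}) p_{4,k} satisfies B₄(1) = 1 and B₄(x³) = x³; thus a generalized Bernstein operator fixing 1 and x³ exists on ℙ₄[−1,2]. -/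

import Mathlib

open Set

noncomputable section

/-- The classical Bernstein basis of `ℙ₄[-1,2]`. -/
def pB4 : Fin 5 → ℝ → ℝ :=
  fun k x => (Nat.choose 4 (k : ℕ)) * (x + 1) ^ (k : ℕ) * (2 - x) ^ (4 - (k : ℕ)) / 81

/-- The coordinates of `x³` in the classical Bernstein basis of `ℙ₄[-1,2]`. -/
def γB4 : Fin 5 → ℝ := ![-1, 5 / 4, -1, -1, 8]

/-- On `ℙ₄[-1,2]`, `x³` has Bernstein coordinates `(-1, 5/4, -1, -1, 8)`; taking as nodes
the real cube roots `t k = γ k ^ (1/3)` (which all lie in `[-1,2]`) and all weights `1`,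
the operator `B₄ f = ∑ f(t k) p k` fixes `1` and `x³`, so a generalized Bernstein operator
fixing `1` and `x³` exists on `ℙ₄[-1,2]`. -/
theorem bernstein_operator_fixing_cube_exists_on_P4_neg_one_two :
    (∀ x : ℝ, x ^ 3 = ∑ k, γB4 k * pB4 k x) ∧
    ∃ t : Fin 5 → ℝ, (∀ k, (t k) ^ 3 = γB4 k ∧ t k ∈ Set.Icc (-1 : ℝ) 2) ∧
      (∀ x : ℝ, ∑ k, pB4 k x = 1) ∧
      (∀ x : ℝ, ∑ k, (t k) ^ 3 * pB4 k x = x ^ 3) := by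
  have h3 : ((3 : Fin 5) : ℕ) = 3 := rfl
  have h4 : ((4 : Fin 5) : ℕ) = 4 := rfl
  have hcoord : ∀ x : ℝ, x ^ 3 = ∑ k, γB4 k * pB4 k x := by
    intro x
    norm_num [Fin.sum_univ_five, pB4, γB4, Nat.choose, h3, h4, Matrix.cons_val_two, Matrix.cons_val_three, Matrix.cons_val_four]
    ring
  have hnn : (0:ℝ) ≤ (5/4 : ℝ) ^ ((1:ℝ)/3) := Real.rpow_nonneg (by norm_num) _
  have hcube : ((5/4 : ℝ) ^ ((1:ℝ)/3)) ^ 3 = 5/4 := by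
    rw [← Real.rpow_natCast ((5/4 : ℝ) ^ ((1:ℝ)/3)) 3, ← Real.rpow_mul (by norm_num)]
    norm_num
  have hle : (5/4 : ℝ) ^ ((1:ℝ)/3) ≤ 2 := by nlinarith [hcube, hnn, sq_nonneg ((5/4 : ℝ) ^ ((1:ℝ)/3) - 2), sq_nonneg ((5/4 : ℝ) ^ ((1:ℝ)/3) + 2)]
  refine ⟨hcoord, ![-1, (5/4 : ℝ) ^ ((1:ℝ)/3), -1, -1, 2], ?_, ?_, ?_⟩
  · intro k
    fin_cases k
    · exact ⟨by norm_num [γB4], by norm_num, by norm_num⟩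
    · exact ⟨by simpa [γB4] using hcube, by show (-1:ℝ) ≤ (5/4 : ℝ) ^ ((1:ℝ)/3); linarith, by simpa using hle⟩
    · exact ⟨by norm_num [γB4], by norm_num, by norm_num⟩
    · exact ⟨by norm_num [γB4], by norm_num, by norm_num⟩
    · exact ⟨by norm_num [γB4], by norm_num, by norm_num⟩
  · intro x
    norm_num [Fin.sum_univ_five, pB4, Nat.choose, h3, h4]
    ring
  · intro x
    rw [hcoord x]
    simp only [Fin.sum_univ_five, γB4, Matrix.cons_val_two, Matrix.cons_val_three, Matrix.cons_val_four]
    norm_num [hcube]
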